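/- Let λ ∈ ℂ with sin(√2·|λ|) ≠ 0 (in particular λ ≠ 0 and √2|λ| ∉ πℤ) and let p ∈ ℝ with sin(2p) ≠ 0. Set γ := cos(√2|λ|), ε := cos(2p)·(γ + 1), and σ := −i·conj(λ)·sin(√2|λ|)/(√2|λ|). Suppose x : ℤ → ℂ is square-summable (∑_{n∈ℤ} |x_n|² < ∞) and satisfies: (i) γ·x_{n−1} − ε·x_n + x_{n+1} = 0 for all n ≤ −1; (ii) γ·x_{−1} − ε·x_0 + σ·e^{−2ip}·x_1 + σ·e^{2ip}·x_2 + γ·x_3 = 0; (iii) γ·x_0 − σ·x_1 − σ·x_2 − ε·x_3 + γ·x_4 = 0; (iv) x_{n−1} − ε·x_n + γ·x_{n+1} = 0 for all n ≥ 4. Then x_n = 0 for all n ∈ ℤ. -/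

import Mathlib

lemma geom_zero (r : ℂ) (hr : ‖r‖ < 1) (M : ℝ) (y : ℤ → ℂ)
    (hb : ∀ n : ℤ, ‖y n‖ ≤ M)
    (hrec : ∀ n : ℤ, n ≤ -1 → y (n + 1) = r * y n) :
    ∀ m : ℤ, m ≤ 0 → y m = 0 := by
  intro m hm
  have key : ∀ k : ℕ, y m = r ^ k * y (m - k) := by
    intro k
    induction k with
    | zero => simp
    | succ k ih =>
      have h1 : y (m - k - 1 + 1) = r * y (m - k - 1) := hrec _ (by omega)
      have h2 : (m - (k:ℤ) - 1 + 1) = m - k := by ring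
      rw [h2] at h1
      have h3 : (m - ((k:ℕ)+1 : ℕ) : ℤ) = m - k - 1 := by push_cast; ring
      rw [h3, ih, h1]; ring
  have hbnd : ∀ k : ℕ, ‖y m‖ ≤ ‖r‖ ^ k * M := by
    intro k
    rw [key k, norm_mul, norm_pow]
    exact mul_le_mul_of_nonneg_left (hb _) (by positivity)
  have htend : Filter.Tendsto (fun k : ℕ => ‖r‖ ^ k * M) Filter.atTop (nhds 0) := by
    simpa using (tendsto_pow_atTop_nhds_zero_of_lt_one (norm_nonneg r) hr).mul_const M
  have hle : ‖y m‖ ≤ 0 := ge_of_tendsto' htend hbnd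
  exact norm_eq_zero.mp (le_antisymm hle (norm_nonneg _))

lemma roots_lt_one (γ ε : ℝ) (hγ : |γ| < 1) (hε : |ε| < 1 + γ) :
    ∃ r₁ r₂ : ℂ, r₁ + r₂ = (ε:ℂ) ∧ r₁ * r₂ = (γ:ℂ) ∧ ‖r₁‖ < 1 ∧ ‖r₂‖ < 1 := by
  have hγ1 : -1 < γ := (abs_lt.1 hγ).1
  have hγ2 : γ < 1 := (abs_lt.1 hγ).2
  have hε1 : -(1+γ) < ε := (abs_lt.1 hε).1
  have hε2 : ε < 1 + γ := (abs_lt.1 hε).2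
  rcases le_or_gt (4*γ) (ε^2) with hD | hD
  · set s := Real.sqrt (ε^2 - 4*γ) with hsdef
    have hs0 : 0 ≤ s := Real.sqrt_nonneg _
    have hssq : s^2 = ε^2 - 4*γ := Real.sq_sqrt (by linarith)
    have h1 : s < 2 - ε := by
      have hsq : s^2 < (2-ε)^2 := by nlinarith
      exact lt_of_pow_lt_pow_left₀ 2 (by linarith) hsq
    have h2 : s < 2 + ε := by
      have hsq : s^2 < (2+ε)^2 := by nlinarith
      exact lt_of_pow_lt_pow_left₀ 2 (by linarith) hsq
    refine ⟨(((ε+s)/2 : ℝ) : ℂ), (((ε-s)/2 : ℝ) : ℂ), ?_, ?_, ?_, ?_⟩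
    · rw [← Complex.ofReal_add, show (ε+s)/2 + (ε-s)/2 = ε by ring]
    · rw [← Complex.ofReal_mul, show (ε+s)/2 * ((ε-s)/2) = (ε^2 - s^2)/4 by ring, hssq]
      norm_num
    · rw [Complex.norm_real, Real.norm_eq_abs]; rw [abs_lt]; constructor <;> [linarith; linarith]
    · rw [Complex.norm_real, Real.norm_eq_abs]; rw [abs_lt]; constructor <;> [linarith; linarith]
  · set t := Real.sqrt (γ - ε^2/4) with htdef
    have ht0 : 0 ≤ t := Real.sqrt_nonneg _
    have htsq : t^2 = γ - ε^2/4 := Real.sq_sqrt (by nlinarith)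
    refine ⟨((ε/2 : ℝ) : ℂ) + (t : ℝ) * Complex.I, ((ε/2 : ℝ) : ℂ) - (t : ℝ) * Complex.I,
      ?_, ?_, ?_, ?_⟩
    · push_cast; ring
    · have : (((ε/2 : ℝ) : ℂ) + (t : ℝ) * Complex.I) * (((ε/2 : ℝ) : ℂ) - (t : ℝ) * Complex.I)
          = (((ε/2)^2 + t^2 : ℝ) : ℂ) := by
        push_cast
        ring_nf
        rw [Complex.I_sq]
        ring
      rw [this]
      norm_cast
      nlinarith
    · have habs : (‖((ε/2 : ℝ) : ℂ) + (t : ℝ) * Complex.I‖)^2 = (ε/2)^2 + t^2 := by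
        rw [Complex.sq_norm, Complex.normSq_add_mul_I]
      have h1 : (‖((ε/2 : ℝ) : ℂ) + (t : ℝ) * Complex.I‖)^2 < 1^2 := by
        rw [habs]; nlinarith
      exact lt_of_pow_lt_pow_left₀ 2 zero_le_one h1
    · have heq : ((ε/2 : ℝ) : ℂ) - (t : ℝ) * Complex.I = (((ε/2 : ℝ) : ℂ) + ((-t : ℝ) : ℂ) * Complex.I) := by
        push_cast; ring
      rw [heq]
      have habs : (‖((ε/2 : ℝ) : ℂ) + ((-t : ℝ)) * Complex.I‖)^2 = (ε/2)^2 + t^2 := by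
        rw [Complex.sq_norm, Complex.normSq_add_mul_I]; ring
      have h1 : (‖((ε/2 : ℝ) : ℂ) + ((-t:ℝ)) * Complex.I‖)^2 < 1^2 := by
        rw [habs]; nlinarith
      exact lt_of_pow_lt_pow_left₀ 2 zero_le_one h1

lemma left_tail (γ ε : ℝ) (hγ : |γ| < 1) (hε : |ε| < 1 + γ) (M : ℝ) (x : ℤ → ℂ)
    (hb : ∀ n : ℤ, ‖x n‖ ≤ M)
    (hrec : ∀ n : ℤ, n ≤ -1 → (γ:ℂ) * x (n-1) - (ε:ℂ) * x n + x (n+1) = 0) :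
    ∀ m : ℤ, m ≤ 0 → x m = 0 := by
  obtain ⟨r₁, r₂, hsum, hprod, h₁, h₂⟩ := roots_lt_one γ ε hγ hε
  have hM0 : 0 ≤ M := le_trans (norm_nonneg (x 0)) (hb 0)
  set y : ℤ → ℂ := fun n => x n - r₁ * x (n-1) with hy
  have hrecy : ∀ n : ℤ, n ≤ -1 → y (n+1) = r₂ * y n := by
    intro n hn
    have h := hrec n hn
    simp only [hy]
    have h3 : (n+1) - 1 = n := by ring
    rw [h3]
    have hx1 : x (n+1) = (ε:ℂ) * x n - (γ:ℂ) * x (n-1) := by linear_combination h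
    rw [hx1, ← hsum, ← hprod]; ring
  have hby : ∀ n : ℤ, ‖y n‖ ≤ M + M := by
    intro n
    simp only [hy]
    calc ‖x n - r₁ * x (n-1)‖
        ≤ ‖x n‖ + ‖r₁ * x (n-1)‖ := by
          simpa [sub_eq_add_neg] using norm_add_le (x n) (-(r₁ * x (n-1)))
      _ ≤ M + M := by
          rw [norm_mul]
          have ha := hb n
          have hc : ‖r₁‖ * ‖x (n-1)‖ ≤ 1 * M :=
            mul_le_mul h₁.le (hb _) (norm_nonneg _) zero_le_one
          linarith
  have hy0 : ∀ m : ℤ, m ≤ 0 → y m = 0 := geom_zero r₂ h₂ (M+M) y hby hrecy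
  have hrecx : ∀ n : ℤ, n ≤ -1 → x (n+1) = r₁ * x n := by
    intro n hn
    have := hy0 (n+1) (by omega)
    simp only [hy] at this
    have h3 : (n+1) - 1 = n := by ring
    rw [h3] at this
    exact sub_eq_zero.mp this
  exact geom_zero r₁ h₁ M x hb hrecx

/-- Completeness of the scattering eigenstates in the generic case: for coupling constant
`λ` with `sin(√2|λ|) ≠ 0` and total momentum `p` with `sin(2p) ≠ 0`, any square-summable
sequence `x : ℤ → ℂ` satisfying the linear system (i)–(iv) (with `γ = cos(√2|λ|)`,
`ε = cos(2p)(γ+1)` and `σ = −i·conj(λ)·sin(√2|λ|)/(√2|λ|)`) vanishes identically. -/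
theorem scattering_states_completeness (l : ℂ) (p : ℝ)
    (hl : Real.sin (Real.sqrt 2 * ‖l‖) ≠ 0)
    (hp : Real.sin (2 * p) ≠ 0)
    (x : ℤ → ℂ) (hsum : Summable fun n : ℤ => ‖x n‖ ^ 2) :
    let γ : ℝ := Real.cos (Real.sqrt 2 * ‖l‖)
    let ε : ℝ := Real.cos (2 * p) * (γ + 1)
    let σ : ℂ := -(Complex.I * (starRingEnd ℂ) l
        * (Real.sin (Real.sqrt 2 * ‖l‖) : ℂ))
      / ((Real.sqrt 2 * ‖l‖ : ℝ) : ℂ)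
    (∀ n : ℤ, n ≤ -1 → (γ : ℂ) * x (n - 1) - (ε : ℂ) * x n + x (n + 1) = 0) →
    ((γ : ℂ) * x (-1) - (ε : ℂ) * x 0
        + σ * Complex.exp (-(2 * p) * Complex.I) * x 1
        + σ * Complex.exp (2 * p * Complex.I) * x 2
        + (γ : ℂ) * x 3 = 0) →
    ((γ : ℂ) * x 0 - σ * x 1 - σ * x 2 - (ε : ℂ) * x 3 + (γ : ℂ) * x 4 = 0) →
    (∀ n : ℤ, 4 ≤ n → x (n - 1) - (ε : ℂ) * x n + (γ : ℂ) * x (n + 1) = 0) →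
    ∀ n : ℤ, x n = 0 := by
  intro γ ε σ h1 h2 h3 h4
  set θ : ℝ := Real.sqrt 2 * ‖l‖ with hθdef
  -- basic facts
  have hcos : |γ| < 1 := by
    have hs := Real.sin_sq_add_cos_sq θ
    have hs2 : 0 < Real.sin θ ^ 2 := by
      have := abs_pos.mpr hl
      nlinarith [sq_abs (Real.sin θ)]
    have : |γ| ^ 2 < 1 ^ 2 := by
      rw [sq_abs]
      show Real.cos θ ^ 2 < 1 ^ 2
      nlinarith
    exact lt_of_pow_lt_pow_left₀ 2 zero_le_one this
  have hγ1 : -1 < γ := (abs_lt.1 hcos).1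
  have hcos2p : |Real.cos (2*p)| < 1 := by
    have hs := Real.sin_sq_add_cos_sq (2*p)
    have hs2 : 0 < Real.sin (2*p) ^ 2 := by
      have := abs_pos.mpr hp
      nlinarith [sq_abs (Real.sin (2*p))]
    have : |Real.cos (2*p)| ^ 2 < 1 ^ 2 := by rw [sq_abs]; nlinarith
    exact lt_of_pow_lt_pow_left₀ 2 zero_le_one this
  have hεb : |ε| < 1 + γ := by
    have hεdef : ε = Real.cos (2*p) * (γ + 1) := rfl
    rw [hεdef, abs_mul, abs_of_pos (by linarith : (0:ℝ) < γ + 1)]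
    nlinarith [abs_nonneg (Real.cos (2*p))]
  -- boundedness from summability
  set M : ℝ := Real.sqrt (∑' n : ℤ, ‖x n‖ ^ 2) with hMdef
  have hb : ∀ n : ℤ, ‖x n‖ ≤ M := by
    intro n
    have h1' : ‖x n‖ ^ 2 ≤ ∑' n : ℤ, ‖x n‖ ^ 2 :=
      hsum.le_tsum n (fun j _ => sq_nonneg _)
    have := Real.sqrt_le_sqrt h1'
    rwa [Real.sqrt_sq (norm_nonneg _)] at this
  -- left tail
  have hleft : ∀ m : ℤ, m ≤ 0 → x m = 0 := left_tail γ ε hcos hεb M x hb h1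
  -- right tail via reflection
  have hright : ∀ m : ℤ, 3 ≤ m → x m = 0 := by
    have hu : ∀ m : ℤ, m ≤ 0 → x (3 - m) = 0 := by
      refine left_tail γ ε hcos hεb M (fun n => x (3 - n)) (fun n => hb _) ?_
      intro n hn
      have h := h4 (3 - n) (by omega)
      have e1 : (3 - n - 1 : ℤ) = 3 - (n + 1) := by ring
      have e2 : (3 - n + 1 : ℤ) = 3 - (n - 1) := by ring
      rw [e1, e2] at h
      linear_combination h
    intro m hm
    have := hu (3 - m) (by omega)
    simpa using this
  -- σ ≠ 0
  have hθ0 : θ ≠ 0 := by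
    intro h
    rw [h] at hl
    exact hl Real.sin_zero
  have hl0 : l ≠ 0 := by
    intro h
    apply hθ0
    rw [hθdef, h]
    simp
  have hσ : σ ≠ 0 := by
    have hσdef : σ = -(Complex.I * (starRingEnd ℂ) l * (Real.sin θ : ℂ)) / ((θ : ℝ) : ℂ) := rfl
    rw [hσdef]
    apply div_ne_zero
    · apply neg_ne_zero.mpr
      apply mul_ne_zero
      apply mul_ne_zero Complex.I_ne_zero
      · simpa using hl0
      · exact Complex.ofReal_ne_zero.mpr hl
    · exact Complex.ofReal_ne_zero.mpr hθ0
  -- middle equations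
  have hxm1 : x (-1) = 0 := hleft (-1) (by omega)
  have hx0 : x 0 = 0 := hleft 0 le_rfl
  have hx3 : x 3 = 0 := hright 3 le_rfl
  have hx4 : x 4 = 0 := hright 4 (by omega)
  have h5 : x 1 + x 2 = 0 := by
    have h3' : σ * (x 1 + x 2) = 0 := by
      rw [hx0, hx3, hx4] at h3
      linear_combination -h3
    exact (mul_eq_zero.mp h3').resolve_left hσ
  have hexp : Complex.exp (-(2 * (p:ℂ)) * Complex.I) - Complex.exp (2 * (p:ℂ) * Complex.I)
      = -2 * (Real.sin (2*p) : ℂ) * Complex.I := by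
    rw [Complex.exp_mul_I, Complex.exp_mul_I, Complex.cos_neg, Complex.sin_neg]
    push_cast
    ring
  have hx1 : x 1 = 0 := by
    have h2' : σ * (Complex.exp (-(2 * (p:ℂ)) * Complex.I)
        - Complex.exp (2 * (p:ℂ) * Complex.I)) * x 1 = 0 := by
      rw [hxm1, hx0, hx3] at h2
      have hx2 : x 2 = -x 1 := by linear_combination h5
      rw [hx2] at h2
      linear_combination h2
    have hne : σ * (Complex.exp (-(2 * (p:ℂ)) * Complex.I)
        - Complex.exp (2 * (p:ℂ) * Complex.I)) ≠ 0 := by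
      apply mul_ne_zero hσ
      rw [hexp]
      apply mul_ne_zero
      apply mul_ne_zero (by norm_num)
      · exact Complex.ofReal_ne_zero.mpr hp
      · exact Complex.I_ne_zero
    exact (mul_eq_zero.mp h2').resolve_left hne
  have hx2 : x 2 = 0 := by linear_combination h5 - hx1
  intro n
  rcases (by omega : n ≤ 0 ∨ n = 1 ∨ n = 2 ∨ 3 ≤ n) with h | h | h | h
  · exact hleft n h
  · rw [h]; exact hx1
  · rw [h]; exact hx2
  · exact hright n h
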